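/- arXiv:2302.09941 — 3 statements merged into one kernel-verified Lean document; each statement's English description precedes it below -/
import Mathlib

section
/- With N(T,Δ) as above (for arbitrary T₁,…,Tₙ > 0), we have |N(T,Δ) − Δ·Σ_{∅≠𝒩⊆[n]} (-1)^{|𝒩|+1}/M_𝒩| ≤ 2ⁿ for every Δ ≥ 0, where 1/M_𝒩 = 0 when M_𝒩 = ∞. -/
def mults (T Δ : ℝ) : Set ℝ := {x : ℝ | ∃ k : ℕ, x = k * T ∧ x ≤ Δ}

def commonMults {n : ℕ} (T : Fin n → ℝ) (𝒩 : Finset (Fin n)) : Set ℝ :=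
  {m : ℝ | 0 < m ∧ ∀ i ∈ 𝒩, ∃ k : ℕ, m = k * T i}

/-- The finset of multiples of `T` up to `Δ`. -/
noncomputable def multsF (T Δ : ℝ) : Finset ℝ :=
  (Finset.range (⌊Δ / T⌋₊ + 1)).image (fun k : ℕ => (k : ℝ) * T)

lemma coe_multsF {T Δ : ℝ} (hT : 0 < T) (hΔ : 0 ≤ Δ) :
    (multsF T Δ : Set ℝ) = mults T Δ := by
  ext x
  simp only [multsF, Finset.coe_image, Finset.coe_range, Set.mem_image, Set.mem_Iio,
    mults, Set.mem_setOf_eq]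
  constructor
  · rintro ⟨k, hk, rfl⟩
    refine ⟨k, rfl, ?_⟩
    have : (k : ℝ) ≤ Δ / T := by
      exact_mod_cast (Nat.le_floor_iff (by positivity)).1 (Nat.lt_succ_iff.1 hk)
    calc (k : ℝ) * T ≤ (Δ / T) * T := by nlinarith
      _ = Δ := by field_simp
  · rintro ⟨k, rfl, hle⟩
    refine ⟨k, ?_, rfl⟩
    rw [Nat.lt_succ_iff, Nat.le_floor_iff (by positivity)]
    rw [le_div_iff₀ hT]
    exact hle

lemma card_multsF {T Δ : ℝ} (hT : 0 < T) :
    (multsF T Δ).card = ⌊Δ / T⌋₊ + 1 := by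
  rw [multsF, Finset.card_image_of_injective, Finset.card_range]
  intro a b hab
  have : (a : ℝ) = b := by
    exact mul_right_cancel₀ hT.ne' hab
  exact_mod_cast this

lemma exists_least_commonMult {n : ℕ} (T : Fin n → ℝ) (hT : ∀ i, 0 < T i)
    {t : Finset (Fin n)} (ht : t.Nonempty) (hS : (commonMults T t).Nonempty) :
    ∃ M, IsLeast (commonMults T t) M := by
  classical
  obtain ⟨i0, hi0⟩ := ht
  have hp : ∃ k : ℕ, ((k : ℝ) * T i0) ∈ commonMults T t := by
    obtain ⟨m, hm⟩ := hS
    obtain ⟨k, hk⟩ := hm.2 i0 hi0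
    exact ⟨k, hk ▸ hm⟩
  have : DecidablePred fun k : ℕ => ((k : ℝ) * T i0) ∈ commonMults T t :=
    Classical.decPred _
  refine ⟨(Nat.find hp : ℝ) * T i0, Nat.find_spec hp, ?_⟩
  rintro m hm
  obtain ⟨k, hk⟩ := hm.2 i0 hi0
  have hkmem : ((k : ℝ) * T i0) ∈ commonMults T t := hk ▸ hm
  have hle : Nat.find hp ≤ k := Nat.find_min' hp hkmem
  rw [hk]
  have := (hT i0).le
  gcongr


lemma inter_eq_multsM {n : ℕ} (T : Fin n → ℝ) (hT : ∀ i, 0 < T i)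
    {t : Finset (Fin n)} (ht : t.Nonempty) {M : ℝ}
    (hM : IsLeast (commonMults T t) M) (Δ : ℝ) (hΔ : 0 ≤ Δ) :
    (⋂ i ∈ (t : Set (Fin n)), mults (T i) Δ) = mults M Δ := by
  have hMpos : 0 < M := hM.1.1
  ext x
  simp only [Set.mem_iInter, mults, Set.mem_setOf_eq, Finset.mem_coe]
  constructor
  · intro hx
    -- x ≤ Δ and x is a common "natural multiple" of all T i, i ∈ t
    obtain ⟨i0, hi0⟩ := ht
    obtain ⟨k0, hk0, hxle⟩ := hx i0 hi0
    have hx0 : 0 ≤ x := by rw [hk0]; exact mul_nonneg (Nat.cast_nonneg _) (hT i0).le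
    -- Euclidean division of x by M
    set q := ⌊x / M⌋₊ with hq
    set r := x - q * M with hr
    have hr0 : 0 ≤ r := by
      have : (q : ℝ) ≤ x / M := Nat.floor_le (div_nonneg hx0 hMpos.le)
      have := mul_le_mul_of_nonneg_right this hMpos.le
      rw [div_mul_cancel₀ _ hMpos.ne'] at this
      simp only [hr]; linarith
    have hrM : r < M := by
      have : x / M < q + 1 := Nat.lt_floor_add_one _
      have := mul_lt_mul_of_pos_right this hMpos
      rw [div_mul_cancel₀ _ hMpos.ne'] at this
      simp only [hr]; push_cast; linarith
    have hrmult : ∀ i ∈ t, ∃ k : ℕ, r = (k : ℝ) * T i := by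
      intro i hi
      obtain ⟨k, hk, _⟩ := hx i hi
      obtain ⟨l, hl⟩ := hM.1.2 i hi
      have hkl : q * l ≤ k := by
        have : ((q * l : ℕ) : ℝ) * T i ≤ (k : ℝ) * T i := by
          push_cast
          rw [mul_assoc, ← hl, ← hk]
          simp only [hr] at hr0; linarith
        have := le_of_mul_le_mul_right this (hT i)
        exact_mod_cast this
      refine ⟨k - q * l, ?_⟩
      rw [hr, hk, hl]
      push_cast [Nat.cast_sub hkl]
      ring
    have hrzero : r = 0 := by
      by_contra hne
      have hrpos : 0 < r := lt_of_le_of_ne hr0 (Ne.symm hne)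
      have : r ∈ commonMults T t := ⟨hrpos, hrmult⟩
      have := hM.2 this
      linarith
    have hxq : x = (q : ℝ) * M := by rw [hr] at hrzero; linarith
    exact ⟨q, hxq, hxle⟩
  · rintro ⟨k, rfl, hle⟩
    intro i hi
    obtain ⟨l, hl⟩ := hM.1.2 i hi
    refine ⟨k * l, ?_, hle⟩
    rw [hl]; push_cast; ring

theorem joint_orders_additive_error {n : ℕ} (T : Fin n → ℝ) (hT : ∀ i, 0 < T i)
    (invM : Finset (Fin n) → ℝ)
    (hinv_empty : ∀ 𝒩 : Finset (Fin n), 𝒩.Nonempty →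
      commonMults T 𝒩 = ∅ → invM 𝒩 = 0)
    (hinv_least : ∀ 𝒩 : Finset (Fin n), 𝒩.Nonempty →
      ∀ M : ℝ, IsLeast (commonMults T 𝒩) M → invM 𝒩 = 1 / M)
    (Δ : ℝ) (hΔ : 0 ≤ Δ) :
    |((⋃ i, mults (T i) Δ).ncard : ℝ) -
      Δ * ∑ 𝒩 ∈ Finset.univ.powerset.filter (fun s : Finset (Fin n) => s.Nonempty),
        (-1 : ℝ) ^ (𝒩.card + 1) * invM 𝒩| ≤ 2 ^ n := by
  classical
  set F : Fin n → Finset ℝ := fun i => multsF (T i) Δ with hF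
  -- the union as a finset
  have hunion : (⋃ i, mults (T i) Δ) = ((Finset.univ.biUnion F : Finset ℝ) : Set ℝ) := by
    rw [Finset.coe_biUnion]
    simp only [Finset.coe_univ, Set.mem_univ, Set.iUnion_true]
    exact (Set.iUnion_congr fun i => (coe_multsF (hT i) hΔ).symm)
  -- cardinality of each intersection, as a function avoiding proofs
  set c : Finset (Fin n) → ℕ := fun t => if h : t.Nonempty then (t.inf' h F).card else 0
    with hc
  -- inclusion-exclusion
  have hIE : ((Finset.univ.biUnion F).card : ℝ) =
      ∑ t ∈ Finset.univ.powerset.filter (fun s : Finset (Fin n) => s.Nonempty),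
        (-1 : ℝ) ^ (t.card + 1) * (c t : ℝ) := by
    have h := Finset.inclusion_exclusion_card_biUnion (Finset.univ : Finset (Fin n)) F
    have h2 : ((Finset.univ.biUnion F).card : ℤ) =
        ∑ t ∈ Finset.univ.powerset.filter (fun s : Finset (Fin n) => s.Nonempty),
          (-1 : ℤ) ^ (t.card + 1) * (c t : ℤ) := by
      rw [h, ← Finset.sum_attach (Finset.univ.powerset.filter
        (fun s : Finset (Fin n) => s.Nonempty))
        (fun t => (-1 : ℤ) ^ (t.card + 1) * (c t : ℤ))]
      apply Finset.sum_congr rfl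
      intro t _
      have h3 : c t.1 = (t.1.inf' (Finset.mem_filter.1 t.2).2 F).card :=
        dif_pos _
      rw [h3]
    exact_mod_cast h2
  rw [hunion, Set.ncard_coe_finset, hIE, Finset.mul_sum, ← Finset.sum_sub_distrib]
  have key : ∀ t ∈ Finset.univ.powerset.filter (fun s : Finset (Fin n) => s.Nonempty),
      |(-1 : ℝ) ^ (t.card + 1) * (c t : ℝ) - Δ * ((-1 : ℝ) ^ (t.card + 1) * invM t)| ≤ 1 := by
    intro t htmem
    have ht : t.Nonempty := (Finset.mem_filter.1 htmem).2
    have h1 : (-1 : ℝ) ^ (t.card + 1) * (c t : ℝ) - Δ * ((-1 : ℝ) ^ (t.card + 1) * invM t)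
        = (-1 : ℝ) ^ (t.card + 1) * ((c t : ℝ) - Δ * invM t) := by ring
    rw [h1, abs_mul, abs_pow, abs_neg, abs_one, one_pow, one_mul]
    -- now the central estimate
    have hcoe : ((t.inf' ht F : Finset ℝ) : Set ℝ) = ⋂ i ∈ (t : Set (Fin n)), mults (T i) Δ := by
      ext x
      simp only [Finset.mem_coe, Finset.mem_inf', Set.mem_iInter, Finset.mem_coe, hF]
      constructor
      · intro hx i hi
        have := hx i hi
        rwa [← coe_multsF (hT i) hΔ]
      · intro hx i hi
        have := hx i hi
        rwa [← coe_multsF (hT i) hΔ] at this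
    have hct : c t = (t.inf' ht F).card := dif_pos ht
    rcases Set.eq_empty_or_nonempty (commonMults T t) with hemp | hne
    · -- no common multiple: intersection is {0}
      have hz : invM t = 0 := hinv_empty t ht hemp
      have hone : ((t.inf' ht F : Finset ℝ) : Set ℝ) = {0} := by
        rw [hcoe]
        ext x
        simp only [Set.mem_iInter, mults, Set.mem_setOf_eq, Finset.mem_coe,
          Set.mem_singleton_iff]
        constructor
        · intro hx
          by_contra hne0
          obtain ⟨i0, hi0⟩ := ht
          obtain ⟨k, hk, _⟩ := hx i0 hi0
          have hx0 : 0 ≤ x := by rw [hk]; exact mul_nonneg (Nat.cast_nonneg _) (hT i0).le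
          have hxpos : 0 < x := lt_of_le_of_ne hx0 (Ne.symm hne0)
          have : x ∈ commonMults T t := ⟨hxpos, fun i hi => by
            obtain ⟨k', hk', _⟩ := hx i hi; exact ⟨k', hk'⟩⟩
          rw [hemp] at this
          exact this
        · rintro rfl i hi
          exact ⟨0, by simp, hΔ⟩
      have hcard : (t.inf' ht F).card = 1 := by
        have := congrArg Set.ncard hone
        rwa [Set.ncard_coe_finset, Set.ncard_singleton] at this
      rw [hct, hcard, hz]
      norm_num
    · -- there is a least common multiple M
      obtain ⟨M, hM⟩ := exists_least_commonMult T hT ht hne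
      have hMpos : 0 < M := hM.1.1
      have hinv : invM t = 1 / M := hinv_least t ht M hM
      have hmult : ((t.inf' ht F : Finset ℝ) : Set ℝ) = (multsF M Δ : Set ℝ) := by
        rw [hcoe, inter_eq_multsM T hT ht hM Δ hΔ, coe_multsF hMpos hΔ]
      have hcard : (t.inf' ht F).card = ⌊Δ / M⌋₊ + 1 := by
        rw [Finset.coe_injective hmult, card_multsF hMpos]
      rw [hct, hcard, hinv]
      have h1 : (⌊Δ / M⌋₊ : ℝ) ≤ Δ / M := Nat.floor_le (div_nonneg hΔ hMpos.le)
      have h2 : Δ / M < (⌊Δ / M⌋₊ : ℝ) + 1 := Nat.lt_floor_add_one _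
      rw [abs_le]
      constructor
      · push_cast
        rw [mul_one_div]
        linarith
      · push_cast
        rw [mul_one_div]
        linarith
  calc |∑ t ∈ Finset.univ.powerset.filter (fun s : Finset (Fin n) => s.Nonempty),
        ((-1 : ℝ) ^ (t.card + 1) * (c t : ℝ) - Δ * ((-1 : ℝ) ^ (t.card + 1) * invM t))|
      ≤ ∑ t ∈ Finset.univ.powerset.filter (fun s : Finset (Fin n) => s.Nonempty),
        |(-1 : ℝ) ^ (t.card + 1) * (c t : ℝ) - Δ * ((-1 : ℝ) ^ (t.card + 1) * invM t)| :=
        Finset.abs_sum_le_sum_abs _ _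
    _ ≤ ∑ _t ∈ Finset.univ.powerset.filter (fun s : Finset (Fin n) => s.Nonempty), (1 : ℝ) :=
        Finset.sum_le_sum key
    _ = ((Finset.univ.powerset.filter (fun s : Finset (Fin n) => s.Nonempty)).card : ℝ) := by
        simp
    _ ≤ 2 ^ n := by
        have h1 : (Finset.univ.powerset.filter
            (fun s : Finset (Fin n) => s.Nonempty)).card ≤ (Finset.univ :
            Finset (Fin n)).powerset.card := Finset.card_filter_le _ _
        have h2 : (Finset.univ : Finset (Fin n)).powerset.card = 2 ^ n := by
          rw [Finset.card_powerset]; simp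
        calc ((Finset.univ.powerset.filter
            (fun s : Finset (Fin n) => s.Nonempty)).card : ℝ)
            ≤ ((2 : ℕ) ^ n : ℝ) := by exact_mod_cast h2 ▸ h1
          _ = 2 ^ n := by push_cast; ring
end

section
/- For positive reals T₁,…,Tₙ, the limit lim_{Δ→∞} N(T,Δ)/Δ exists. -/
open Filter Set

lemma sum_window (f : ℕ → ℕ) (L : ℕ) (hper : ∀ m, f (m + L) = f m) (a : ℕ) :
    ∑ k ∈ Finset.range L, f (a + k) = ∑ k ∈ Finset.range L, f k := by
  induction a with
  | zero => simp
  | succ a ih =>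
    have h2 := Finset.sum_range_succ' (fun k => f (a + k)) L
    rw [Finset.sum_range_succ (fun k => f (a + k)) L] at h2
    simp only [hper, Nat.add_zero] at h2
    have e : ∑ k ∈ Finset.range L, f (a + (k + 1)) = ∑ k ∈ Finset.range L, f (a + 1 + k) :=
      Finset.sum_congr rfl (fun k _ => by congr 1; omega)
    rw [e] at h2
    omega

lemma sum_block (f : ℕ → ℕ) (L : ℕ) (hper : ∀ m, f (m + L) = f m) (a : ℕ) :
    ∑ k ∈ Finset.range (a + L), f k = (∑ k ∈ Finset.range a, f k) + ∑ k ∈ Finset.range L, f k := by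
  have hw : ∑ i ∈ Finset.Ico a (a + L), f i = ∑ k ∈ Finset.range L, f k := by
    rw [Finset.sum_Ico_eq_sum_range]
    simp only [Nat.add_sub_cancel_left]
    exact sum_window f L hper a
  calc ∑ k ∈ Finset.range (a + L), f k = ∑ k ∈ Finset.Ico 0 (a + L), f k := by
        rw [Finset.range_eq_Ico]
    _ = ∑ k ∈ Finset.Ico 0 a, f k + ∑ k ∈ Finset.Ico a (a + L), f k :=
        (Finset.sum_Ico_consecutive f (Nat.zero_le a) (Nat.le_add_right a L)).symm
    _ = (∑ k ∈ Finset.range a, f k) + ∑ k ∈ Finset.range L, f k := by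
        rw [← Finset.range_eq_Ico, hw]

lemma sum_blocks (f : ℕ → ℕ) (L : ℕ) (hper : ∀ m, f (m + L) = f m) (t r : ℕ) :
    ∑ k ∈ Finset.range (t * L + r), f k
      = t * (∑ k ∈ Finset.range L, f k) + ∑ k ∈ Finset.range r, f k := by
  induction t with
  | zero => simp
  | succ t ih =>
    have h : (t + 1) * L + r = (t * L + r) + L := by ring
    rw [h, sum_block f L hper, ih]
    ring

lemma filter_count_bound (P : ℕ → Prop) [DecidablePred P] (L : ℕ) (hL : 0 < L)
    (hper : ∀ k, P (k + L) ↔ P k) (m : ℕ) :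
    |(((Finset.range m).filter P).card : ℝ)
      - (((Finset.range L).filter P).card : ℝ) / L * m| ≤ L := by
  set f : ℕ → ℕ := fun k => if P k then 1 else 0 with hf
  have hperf : ∀ k, f (k + L) = f k := fun k => by simp only [hf, hper]
  have hcard : ∀ M : ℕ, ((Finset.range M).filter P).card = ∑ k ∈ Finset.range M, f k :=
    fun M => Finset.card_filter _ _
  have hfle : ∀ M : ℕ, ∑ k ∈ Finset.range M, f k ≤ M := by
    intro M
    calc ∑ k ∈ Finset.range M, f k ≤ ∑ k ∈ Finset.range M, 1 :=
          Finset.sum_le_sum (fun k _ => by simp only [hf]; split <;> omega)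
      _ = M := by simp
  have hm : m = m / L * L + m % L := by
    rw [Nat.mul_comm]; exact (Nat.div_add_mod m L).symm
  have hr : m % L < L := Nat.mod_lt m hL
  have key : ∑ k ∈ Finset.range m, f k
      = m / L * (∑ k ∈ Finset.range L, f k) + ∑ k ∈ Finset.range (m % L), f k := by
    conv_lhs => rw [hm]
    exact sum_blocks f L hperf _ _
  have hL' : (0:ℝ) < L := by exact_mod_cast hL
  have hdle : ((∑ k ∈ Finset.range L, f k : ℕ) : ℝ) ≤ L := by exact_mod_cast hfle L
  have hFrle : ((∑ k ∈ Finset.range (m % L), f k : ℕ) : ℝ) ≤ ((m % L : ℕ) : ℝ) := by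
    exact_mod_cast hfle _
  have hrle : ((m % L : ℕ) : ℝ) ≤ (L : ℝ) := by exact_mod_cast hr.le
  rw [hcard m, hcard L, key]
  set d : ℕ := ∑ k ∈ Finset.range L, f k
  set Fr : ℕ := ∑ k ∈ Finset.range (m % L), f k
  set t : ℕ := m / L
  set r : ℕ := m % L
  have hmr : (m : ℝ) = (t : ℝ) * L + (r : ℝ) := by exact_mod_cast hm
  have hsplit : (d:ℝ)/L * m = (t:ℝ) * d + (d:ℝ) * r / L := by
    rw [hmr]; field_simp
  push_cast
  rw [hsplit]
  have h1 : (0:ℝ) ≤ (Fr:ℝ) := by positivity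
  have h2 : (0:ℝ) ≤ (d:ℝ) * r / L := by positivity
  have h3 : (d:ℝ) * r / L ≤ (r:ℝ) := by
    rw [div_le_iff₀ hL']
    nlinarith [Nat.cast_nonneg (α := ℝ) r]
  rw [abs_le]
  constructor <;> nlinarith

lemma zero_mem_mults {T Δ : ℝ} (hΔ : 0 ≤ Δ) : (0:ℝ) ∈ mults T Δ :=
  ⟨0, by simp, hΔ⟩

lemma mults_finite {T : ℝ} (hT : 0 < T) (Δ : ℝ) : (mults T Δ).Finite := by
  have hsub : mults T Δ ⊆ (fun k : ℕ => (k:ℝ) * T) '' (Set.Iic ⌈Δ / T⌉₊) := by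
    rintro x ⟨k, rfl, hle⟩
    refine ⟨k, ?_, rfl⟩
    simp only [Set.mem_Iic]
    have h1 : (k:ℝ) ≤ Δ / T := (le_div_iff₀ hT).mpr hle
    have h2 : (k:ℝ) ≤ (⌈Δ / T⌉₊ : ℝ) := h1.trans (Nat.le_ceil _)
    exact_mod_cast h2
  exact Set.Finite.subset ((Set.finite_Iic _).image _) hsub

lemma biUnion_mults_eq {n : ℕ} (T : Fin n → ℝ) (s : Finset (Fin n)) (β : ℝ)
    (a : Fin n → ℕ) (ha : ∀ j ∈ s, T j = a j * β) (Δ : ℝ) :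
    (⋃ j ∈ s, mults (T j) Δ) =
      (fun m : ℕ => (m : ℝ) * β) '' {m : ℕ | (∃ j ∈ s, a j ∣ m) ∧ (m : ℝ) * β ≤ Δ} := by
  ext x
  simp only [Set.mem_iUnion, mults, Set.mem_setOf_eq, Set.mem_image, exists_prop]
  constructor
  · rintro ⟨j, hj, k, rfl, hle⟩
    rw [ha j hj] at hle ⊢
    refine ⟨k * a j, ⟨⟨j, hj, ⟨k, Nat.mul_comm k (a j)⟩⟩, ?_⟩, ?_⟩ <;> push_cast <;> linarith [hle]
  · rintro ⟨m, ⟨⟨j, hj, c, hc⟩, hle⟩, rfl⟩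
    refine ⟨j, hj, c, ?_, ?_⟩
    · rw [ha j hj, hc]; push_cast; ring
    · exact hle

lemma comm_class_bound {n : ℕ} (T : Fin n → ℝ) (s : Finset (Fin n)) (β : ℝ) (hβ : 0 < β)
    (a : Fin n → ℕ) (ha0 : ∀ j ∈ s, 0 < a j) (ha : ∀ j ∈ s, T j = a j * β) :
    ∃ c C : ℝ, ∀ Δ : ℝ, 0 ≤ Δ →
      |((⋃ j ∈ s, mults (T j) Δ).ncard : ℝ) - c * Δ| ≤ C := by
  classical
  set P : ℕ → Prop := fun m => ∃ j ∈ s, a j ∣ m with hP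
  set L : ℕ := ∏ j ∈ s, a j with hLdef
  have hLpos : 0 < L := Finset.prod_pos ha0
  have hper : ∀ k, P (k + L) ↔ P k := by
    intro k
    constructor
    · rintro ⟨j, hj, hd⟩
      refine ⟨j, hj, ?_⟩
      have h2 : a j ∣ L := Finset.dvd_prod_of_mem a hj
      have := Nat.dvd_sub hd h2
      simpa using this
    · rintro ⟨j, hj, hd⟩
      exact ⟨j, hj, hd.add (Finset.dvd_prod_of_mem a hj)⟩
  set d : ℕ := ((Finset.range L).filter P).card with hddef
  set A : ℝ := (d : ℝ) / L with hAdef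
  have hL' : (0:ℝ) < L := by exact_mod_cast hLpos
  have hA0 : 0 ≤ A := by positivity
  have hA1 : A ≤ 1 := by
    rw [hAdef, div_le_one hL']
    exact_mod_cast (Finset.card_filter_le _ _).trans (by simp)
  refine ⟨A / β, (L : ℝ) + 1, fun Δ hΔ => ?_⟩
  set M : ℕ := ⌊Δ / β⌋₊ with hMdef
  have hdivnn : 0 ≤ Δ / β := div_nonneg hΔ hβ.le
  have hinj : Function.Injective (fun m : ℕ => (m : ℝ) * β) := by
    intro m1 m2 h
    have := mul_right_cancel₀ hβ.ne' h
    exact_mod_cast this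
  have hset : {m : ℕ | P m ∧ (m : ℝ) * β ≤ Δ} = ↑((Finset.range (M + 1)).filter P) := by
    ext m
    simp only [Set.mem_setOf_eq, Finset.coe_filter, Finset.mem_range, Nat.lt_succ_iff]
    have : (m : ℝ) * β ≤ Δ ↔ m ≤ M := by
      rw [← le_div_iff₀ hβ, hMdef, Nat.le_floor_iff hdivnn]
    rw [this]
    tauto
  have hcount : ((⋃ j ∈ s, mults (T j) Δ).ncard : ℝ)
      = (((Finset.range (M + 1)).filter P).card : ℝ) := by
    rw [biUnion_mults_eq T s β a ha Δ, Set.ncard_image_of_injective _ hinj, hset,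
      Set.ncard_coe_finset]
  have bound' : |(((Finset.range (M + 1)).filter P).card : ℝ)
      - ((((Finset.range L).filter P).card : ℝ) / L) * ((M : ℝ) + 1)| ≤ L := by
    have h := filter_count_bound P L hLpos hper (M + 1)
    push_cast at h
    exact h
  have hAeq : (((Finset.range L).filter P).card : ℝ) / L = A := by rw [hAdef, hddef]
  rw [hAeq] at bound'
  rw [hcount]
  have hfl1 : (M : ℝ) ≤ Δ / β := Nat.floor_le hdivnn
  have hfl2 : Δ / β < (M : ℝ) + 1 := Nat.lt_floor_add_one _
  have hcΔ : A / β * Δ = A * (Δ / β) := by ring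
  rw [hcΔ]
  have h5' : A * (Δ / β) ≤ A * ((M : ℝ) + 1) := by nlinarith
  have h6' : A * ((M : ℝ) + 1) - A * (Δ / β) ≤ 1 := by nlinarith
  rw [abs_le] at bound' ⊢
  constructor <;> linarith [bound'.1, bound'.2, h5', h6']

def Commensurate (x y : ℝ) : Prop := ∃ p q : ℕ, 0 < p ∧ 0 < q ∧ (p:ℝ) * x = (q:ℝ) * y

lemma comm_refl (x : ℝ) : Commensurate x x := ⟨1, 1, one_pos, one_pos, rfl⟩

lemma comm_symm {x y : ℝ} (h : Commensurate x y) : Commensurate y x := by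
  obtain ⟨p, q, hp, hq, h⟩ := h; exact ⟨q, p, hq, hp, h.symm⟩

lemma comm_trans {x y z : ℝ} (h1 : Commensurate x y) (h2 : Commensurate y z) :
    Commensurate x z := by
  obtain ⟨p, q, hp, hq, h1⟩ := h1
  obtain ⟨p', q', hp', hq', h2⟩ := h2
  refine ⟨p * p', q * q', Nat.mul_pos hp hp', Nat.mul_pos hq hq', ?_⟩
  push_cast
  calc (p:ℝ) * p' * x = p' * ((p:ℝ) * x) := by ring
    _ = p' * ((q:ℝ) * y) := by rw [h1]
    _ = (q:ℝ) * ((p':ℝ) * y) := by ring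
    _ = (q:ℝ) * ((q':ℝ) * z) := by rw [h2]
    _ = (q:ℝ) * q' * z := by ring

lemma union_bound {n : ℕ} (T : Fin n → ℝ) (hT : ∀ i, 0 < T i) (s : Finset (Fin n)) :
    ∃ c C : ℝ, ∀ Δ : ℝ, 0 ≤ Δ →
      |((⋃ j ∈ s, mults (T j) Δ).ncard : ℝ) - c * Δ| ≤ C := by
  classical
  induction s using Finset.strongInduction with
  | _ s ih =>
  rcases s.eq_empty_or_nonempty with rfl | ⟨i, hi⟩
  · exact ⟨0, 0, fun Δ hΔ => by simp⟩
  set s₁ := s.filter (fun j => Commensurate (T j) (T i)) with hs₁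
  set s₂ := s \ s₁ with hs₂
  have hi1 : i ∈ s₁ := Finset.mem_filter.mpr ⟨hi, comm_refl _⟩
  have hch : ∀ j, ∃ pq : ℕ × ℕ, j ∈ s₁ →
      0 < pq.1 ∧ 0 < pq.2 ∧ (pq.1 : ℝ) * T j = (pq.2 : ℝ) * T i := by
    intro j
    by_cases hj : j ∈ s₁
    · obtain ⟨p, q, hp, hq, h⟩ := (Finset.mem_filter.mp hj).2
      exact ⟨(p, q), fun _ => ⟨hp, hq, h⟩⟩
    · exact ⟨(1, 1), fun h => absurd h hj⟩
  choose pq hpq using hch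
  set p : Fin n → ℕ := fun j => (pq j).1 with hpdef
  set q : Fin n → ℕ := fun j => (pq j).2 with hqdef
  set Pr : ℕ := ∏ j ∈ s₁, p j with hPrdef
  have hPrpos : 0 < Pr := Finset.prod_pos (fun j hj => (hpq j hj).1)
  set β : ℝ := T i / Pr with hβdef
  have hβ : 0 < β := div_pos (hT i) (by exact_mod_cast hPrpos)
  set a : Fin n → ℕ := fun j => q j * (Pr / p j) with hadef
  have ha0 : ∀ j ∈ s₁, 0 < a j := by
    intro j hj
    have hdvd : p j ∣ Pr := Finset.dvd_prod_of_mem p hj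
    exact Nat.mul_pos (hpq j hj).2.1
      (Nat.div_pos (Nat.le_of_dvd hPrpos hdvd) (hpq j hj).1)
  have ha : ∀ j ∈ s₁, T j = a j * β := by
    intro j hj
    obtain ⟨hp, hq, h⟩ := hpq j hj
    have hdvd : p j ∣ Pr := Finset.dvd_prod_of_mem p hj
    have hcast : ((Pr / p j : ℕ) : ℝ) = (Pr : ℝ) / (p j : ℝ) :=
      Nat.cast_div hdvd (by exact_mod_cast hp.ne')
    have hp' : (p j : ℝ) ≠ 0 := by exact_mod_cast hp.ne'
    have hPr' : (Pr : ℝ) ≠ 0 := by exact_mod_cast hPrpos.ne'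
    have : (a j : ℝ) = (q j : ℝ) * ((Pr : ℝ) / (p j : ℝ)) := by
      rw [hadef]; push_cast [hcast]; ring
    rw [this, hβdef]
    field_simp
    linear_combination h
  obtain ⟨c₁, C₁, h₁⟩ := comm_class_bound T s₁ β hβ a ha0 ha
  by_cases h2e : s₂ = ∅
  · have hseq : s₁ = s := by
      apply Finset.Subset.antisymm (Finset.filter_subset _ _)
      intro x hx
      by_contra hx1
      have : x ∈ s₂ := Finset.mem_sdiff.mpr ⟨hx, hx1⟩
      rw [h2e] at this
      exact absurd this (Finset.notMem_empty x)
    rw [← hseq]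
    exact ⟨c₁, C₁, h₁⟩
  · obtain ⟨l, hl⟩ := Finset.nonempty_iff_ne_empty.mpr h2e
    have hss : s₂ ⊂ s := by
      rw [Finset.ssubset_iff_of_subset (Finset.sdiff_subset)]
      exact ⟨i, hi, fun hc => (Finset.mem_sdiff.mp hc).2 hi1⟩
    obtain ⟨c₂, C₂, h₂⟩ := ih s₂ hss
    refine ⟨c₁ + c₂, C₁ + C₂ + 1, fun Δ hΔ => ?_⟩
    set A := ⋃ j ∈ s₁, mults (T j) Δ with hA
    set B := ⋃ j ∈ s₂, mults (T j) Δ with hB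
    have hU : (⋃ j ∈ s, mults (T j) Δ) = A ∪ B := by
      have hun : s₁ ∪ s₂ = s := Finset.union_sdiff_of_subset (Finset.filter_subset _ _)
      rw [hA, hB, ← hun, Finset.set_biUnion_union]
    have hAfin : A.Finite := Set.Finite.biUnion s₁.finite_toSet (fun j _ => mults_finite (hT j) Δ)
    have hBfin : B.Finite := Set.Finite.biUnion s₂.finite_toSet (fun j _ => mults_finite (hT j) Δ)
    have h0A : (0:ℝ) ∈ A := by
      rw [hA]; simp only [Set.mem_iUnion]; exact ⟨i, hi1, zero_mem_mults hΔ⟩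
    have h0B : (0:ℝ) ∈ B := by
      rw [hB]; simp only [Set.mem_iUnion]; exact ⟨l, hl, zero_mem_mults hΔ⟩
    have hAB : A ∩ B = {0} := by
      apply Set.Subset.antisymm
      · rintro x ⟨hxA, hxB⟩
        rw [hA] at hxA; rw [hB] at hxB
        simp only [Set.mem_iUnion] at hxA hxB
        obtain ⟨j, hj, k, hk, -⟩ := hxA
        obtain ⟨l', hl', m, hm, -⟩ := hxB
        rw [Set.mem_singleton_iff]
        by_contra hx0
        have hk0 : k ≠ 0 := by rintro rfl; simp at hk; exact hx0 hk
        have hm0 : m ≠ 0 := by rintro rfl; simp at hm; exact hx0 hm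
        have hcjl : Commensurate (T j) (T l') :=
          ⟨k, m, Nat.pos_of_ne_zero hk0, Nat.pos_of_ne_zero hm0, by rw [← hk, ← hm]⟩
        have hcji : Commensurate (T j) (T i) := (Finset.mem_filter.mp hj).2
        have hcli : Commensurate (T l') (T i) := comm_trans (comm_symm hcjl) hcji
        have : l' ∉ s₁ := (Finset.mem_sdiff.mp hl').2
        exact this (Finset.mem_filter.mpr ⟨(Finset.mem_sdiff.mp hl').1, hcli⟩)
      · rintro x hx
        rw [Set.mem_singleton_iff] at hx
        subst hx
        exact ⟨h0A, h0B⟩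
    have hBpos : 1 ≤ B.ncard := (Set.ncard_pos hBfin).mpr ⟨0, h0B⟩
    have hcardU : ((A ∪ B).ncard : ℝ) = (A.ncard : ℝ) + (B.ncard : ℝ) - 1 := by
      have hsplit : A ∪ B = A ∪ (B \ {0}) := by
        ext x
        simp only [Set.mem_union, Set.mem_diff, Set.mem_singleton_iff]
        constructor
        · rintro (h | h)
          · exact Or.inl h
          · by_cases hx : x = 0
            · exact Or.inl (hx ▸ h0A)
            · exact Or.inr ⟨h, hx⟩
        · rintro (h | ⟨h, -⟩)
          · exact Or.inl h
          · exact Or.inr h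
      have hdisj : Disjoint A (B \ {0}) := by
        rw [Set.disjoint_left]
        rintro x hxA ⟨hxB, hx0⟩
        apply hx0
        rw [← hAB]
        exact ⟨hxA, hxB⟩
      rw [hsplit, Set.ncard_union_eq hdisj hAfin hBfin.diff,
        Set.ncard_diff_singleton_of_mem h0B]
      push_cast [Nat.cast_sub hBpos]
      ring
    rw [hU, hcardU]
    have e1 := h₁ Δ hΔ
    have e2 := h₂ Δ hΔ
    rw [abs_le] at e1 e2 ⊢
    constructor <;> [linarith [e1.1, e2.1]; linarith [e1.2, e2.2]]

theorem joint_order_density_exists {n : ℕ} (T : Fin n → ℝ) (hT : ∀ i, 0 < T i) :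
    ∃ c : ℝ, Filter.Tendsto
      (fun Δ : ℝ => ((⋃ i, mults (T i) Δ).ncard : ℝ) / Δ)
      Filter.atTop (nhds c) := by
  obtain ⟨c, C, h⟩ := union_bound T hT Finset.univ
  refine ⟨c, ?_⟩
  have hx : ∀ Δ : ℝ, (⋃ i, mults (T i) Δ) = ⋃ j ∈ Finset.univ, mults (T j) Δ := by
    intro Δ; simp
  have h0 : Filter.Tendsto (fun Δ : ℝ => ((⋃ i, mults (T i) Δ).ncard : ℝ) / Δ - c)
      Filter.atTop (nhds 0) := by
    apply squeeze_zero_norm' (a := fun Δ : ℝ => |C| / Δ)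
    · filter_upwards [Filter.eventually_ge_atTop (1:ℝ)] with Δ hΔ1
      have hΔ0 : (0:ℝ) < Δ := lt_of_lt_of_le one_pos hΔ1
      have hh := h Δ hΔ0.le
      rw [← hx Δ] at hh
      rw [Real.norm_eq_abs]
      have heq : ((⋃ i, mults (T i) Δ).ncard : ℝ) / Δ - c
          = (((⋃ i, mults (T i) Δ).ncard : ℝ) - c * Δ) / Δ := by
        field_simp
      rw [heq, abs_div, abs_of_pos hΔ0, div_le_div_iff_of_pos_right hΔ0]
      exact hh.trans (le_abs_self C)
    · exact tendsto_const_nhds.div_atTop Filter.tendsto_id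
  have h1 := h0.add_const c
  simpa using h1
end

section
/- If T₁, T₂ > 0 either have no common integer multiple or have least common multiple greater than Ψ·min{T₁,T₂}, then for every Δ ≥ 0, |M(T₁,Δ) ∩ M(T₂,Δ)| ≤ Δ/(Ψ·min{T₁,T₂}) + 1. -/
def commonMults2 (T₁ T₂ : ℝ) : Set ℝ :=
  {m : ℝ | 0 < m ∧ (∃ k : ℕ, m = k * T₁) ∧ (∃ k : ℕ, m = k * T₂)}

theorem misaligned_intersection_bound (T₁ T₂ Ψ Δ : ℝ) (h₁ : 0 < T₁)
    (h₂ : 0 < T₂) (hΨ : 0 < Ψ) (hΔ : 0 ≤ Δ)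
    (hmis : commonMults2 T₁ T₂ = ∅ ∨
      ∀ L : ℝ, IsLeast (commonMults2 T₁ T₂) L → Ψ * min T₁ T₂ < L) :
    ((mults T₁ Δ ∩ mults T₂ Δ).ncard : ℝ) ≤ Δ / (Ψ * min T₁ T₂) + 1 := by
  set ε := Ψ * min T₁ T₂ with hεdef
  have hεpos : 0 < ε := mul_pos hΨ (lt_min h₁ h₂)
  have hdivε : 0 ≤ Δ / ε := div_nonneg hΔ hεpos.le
  by_cases hemp : commonMults2 T₁ T₂ = ∅
  · have hsub : mults T₁ Δ ∩ mults T₂ Δ ⊆ {(0 : ℝ)} := by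
      rintro x ⟨⟨k, hk, hkΔ⟩, ⟨j, hj, -⟩⟩
      simp only [Set.mem_singleton_iff]
      by_contra hx0
      have hxpos : 0 < x := lt_of_le_of_ne (by rw [hk]; positivity) (Ne.symm hx0)
      have hx : x ∈ commonMults2 T₁ T₂ := ⟨hxpos, ⟨k, hk⟩, ⟨j, hj⟩⟩
      rw [hemp] at hx; exact hx
    have h1 : (mults T₁ Δ ∩ mults T₂ Δ).ncard ≤ 1 := by
      have := Set.ncard_le_ncard hsub (Set.finite_singleton 0)
      simpa using this
    calc ((mults T₁ Δ ∩ mults T₂ Δ).ncard : ℝ) ≤ 1 := by exact_mod_cast h1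
      _ ≤ Δ / ε + 1 := by linarith
  · obtain ⟨m, hmpos, ⟨k, hk⟩, ⟨j, hj⟩⟩ := Set.nonempty_iff_ne_empty.2 hemp
    set K : Set ℕ := {a | 0 < a ∧ ∃ b : ℕ, (a : ℝ) * T₁ = b * T₂} with hKdef
    have hKne : K.Nonempty := by
      refine ⟨k, ?_, ⟨j, by rw [← hk, hj]⟩⟩
      rcases Nat.eq_zero_or_pos k with h | h
      · exfalso; rw [h] at hk; simp at hk; rw [hk] at hmpos; exact lt_irrefl _ hmpos
      · exact h
    set k₀ := sInf K with hk₀def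
    have hk₀ : k₀ ∈ K := Nat.sInf_mem hKne
    obtain ⟨hk₀pos, b₀, hb₀⟩ := hk₀
    set L : ℝ := (k₀ : ℝ) * T₁ with hLdef
    have hLpos : 0 < L := by
      apply mul_pos _ h₁
      exact_mod_cast hk₀pos
    have hLeast : IsLeast (commonMults2 T₁ T₂) L := by
      constructor
      · exact ⟨hLpos, ⟨k₀, rfl⟩, ⟨b₀, hb₀⟩⟩
      · rintro m' ⟨hm'pos, ⟨a, ha⟩, ⟨b, hb⟩⟩
        have hapos : 0 < a := by
          rcases Nat.eq_zero_or_pos a with h | h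
          · exfalso; rw [h] at ha; simp at ha; rw [ha] at hm'pos; exact lt_irrefl _ hm'pos
          · exact h
        have haK : a ∈ K := ⟨hapos, ⟨b, by rw [← ha, hb]⟩⟩
        have : k₀ ≤ a := Nat.sInf_le haK
        rw [hLdef, ha]
        exact mul_le_mul_of_nonneg_right (by exact_mod_cast this) h₁.le
    have hεL : ε < L := (hmis.resolve_left hemp) L hLeast
    set N := ⌊Δ / L⌋₊ with hNdef
    have hsub : mults T₁ Δ ∩ mults T₂ Δ ⊆ (fun q : ℕ => (q : ℝ) * L) '' Set.Iic N := by
      rintro x ⟨⟨k, hkx, hkΔ⟩, ⟨j, hjx, -⟩⟩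
      set q := k / k₀ with hqdef
      set r := k % k₀ with hrdef
      have hdm : k₀ * q + r = k := Nat.div_add_mod k k₀
      have hr0 : r = 0 := by
        by_contra hr
        have hrpos : 0 < r := Nat.pos_of_ne_zero hr
        have hrlt : r < k₀ := Nat.mod_lt _ hk₀pos
        set y : ℝ := (r : ℝ) * T₁ with hydef
        have hypos : 0 < y := mul_pos (by exact_mod_cast hrpos) h₁
        have hxy : x = (q : ℝ) * L + y := by
          rw [hkx, hLdef, hydef, ← hdm]
          push_cast
          ring
        have hqbj : q * b₀ ≤ j := by
          have h1 : ((q * b₀ : ℕ) : ℝ) * T₂ ≤ (j : ℝ) * T₂ := by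
            push_cast
            calc (q : ℝ) * b₀ * T₂ = (q : ℝ) * L := by rw [hb₀]; ring
              _ ≤ x := by nlinarith
              _ = (j : ℝ) * T₂ := hjx
          have := le_of_mul_le_mul_right h1 h₂
          exact_mod_cast this
        have hyT₂ : y = ((j - q * b₀ : ℕ) : ℝ) * T₂ := by
          have : y = x - (q : ℝ) * L := by rw [hxy]; ring
          rw [this, hjx, Nat.cast_sub hqbj, hb₀]
          push_cast
          ring
        have hyC : y ∈ commonMults2 T₁ T₂ := ⟨hypos, ⟨r, rfl⟩, ⟨_, hyT₂⟩⟩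
        have hLy : L ≤ y := hLeast.2 hyC
        have : y < L := by
          rw [hydef, hLdef]
          exact mul_lt_mul_of_pos_right (by exact_mod_cast hrlt) h₁
        linarith
      have hkq : k = q * k₀ := by rw [← hdm, hr0, Nat.add_zero, Nat.mul_comm]
      have hxq : x = (q : ℝ) * L := by
        rw [hkx, hkq, hLdef]; push_cast; ring
      have hqN : q ≤ N := by
        apply Nat.le_floor
        rw [le_div_iff₀ hLpos]
        rw [← hxq]; exact hkΔ
      exact ⟨q, hqN, hxq.symm⟩
    have hfin : ((fun q : ℕ => (q : ℝ) * L) '' Set.Iic N).Finite :=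
      (Set.finite_Iic N).image _
    have hcard : (mults T₁ Δ ∩ mults T₂ Δ).ncard ≤ N + 1 := by
      calc (mults T₁ Δ ∩ mults T₂ Δ).ncard ≤
          ((fun q : ℕ => (q : ℝ) * L) '' Set.Iic N).ncard :=
            Set.ncard_le_ncard hsub hfin
        _ ≤ (Set.Iic N).ncard := Set.ncard_image_le (Set.finite_Iic N)
        _ = N + 1 := by
            rw [show (Set.Iic N) = ↑(Finset.Iic N) by simp, Set.ncard_coe_finset,
              Nat.card_Iic]
    have hNle : (N : ℝ) ≤ Δ / L := Nat.floor_le (div_nonneg hΔ hLpos.le)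
    have hdd : Δ / L ≤ Δ / ε := div_le_div_of_nonneg_left hΔ hεpos hεL.le
    calc ((mults T₁ Δ ∩ mults T₂ Δ).ncard : ℝ) ≤ (N : ℝ) + 1 := by exact_mod_cast hcard
      _ ≤ Δ / L + 1 := by linarith
      _ ≤ Δ / ε + 1 := by linarith
end
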